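/- HyperQCTL* is strictly more expressive than MPL[E]: for every closed MPL[E] sentence there is a HyperQCTL* formula with the same AP-labeled tree models, and moreover there exists a HyperQCTL* formula ψ such that no closed MPL[E] sentence φ satisfies (for every AP-labeled tree T, T ⊨ φ iff T ⊨ ψ). -/

import Mathlib

set_option linter.unusedVariables false

/-- A trace over a set `AP` of atomic propositions: an infinite sequence of subsets of `AP`. -/
abbrev Trace (AP : Type) := ℕ → Set AP

/-! ### HyperQPTL -/

inductive HQPTL (AP : Type) : Type
  | atom  : AP → ℕ → HQPTL AP          -- a_π
  | prop  : ℕ → HQPTL AP               -- q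
  | not   : HQPTL AP → HQPTL AP
  | or    : HQPTL AP → HQPTL AP → HQPTL AP
  | next  : HQPTL AP → HQPTL AP
  | untl  : HQPTL AP → HQPTL AP → HQPTL AP
  | exTr  : ℕ → HQPTL AP → HQPTL AP    -- ∃π
  | allTr : ℕ → HQPTL AP → HQPTL AP    -- ∀π
  | exPr  : ℕ → HQPTL AP → HQPTL AP    -- ∃q
  | allPr : ℕ → HQPTL AP → HQPTL AP    -- ∀q

namespace HQPTL

variable {AP : Type}

/-- Satisfaction `Π,i ⊨_T φ` for HyperQPTL.  `V` assigns traces (in `T`) to trace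
variables, `P` assigns to each propositional variable a trace over `{q}`
(modelled as `ℕ → Prop`). -/
def sat (T : Set (Trace AP)) : (ℕ → Trace AP) → (ℕ → ℕ → Prop) → ℕ → HQPTL AP → Prop
  | V, P, i, atom a π => a ∈ V π i
  | V, P, i, prop q => P q i
  | V, P, i, not φ => ¬ sat T V P i φ
  | V, P, i, or φ ψ => sat T V P i φ ∨ sat T V P i ψ
  | V, P, i, next φ => sat T V P (i + 1) φ
  | V, P, i, untl φ ψ =>
      ∃ j, i ≤ j ∧ sat T V P j ψ ∧ ∀ k, i ≤ k → k < j → sat T V P k φ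
  | V, P, i, exTr π φ => ∃ t ∈ T, sat T (Function.update V π t) P i φ
  | V, P, i, allTr π φ => ∀ t ∈ T, sat T (Function.update V π t) P i φ
  | V, P, i, exPr q φ => ∃ p : ℕ → Prop, sat T V (Function.update P q p) i φ
  | V, P, i, allPr q φ => ∀ p : ℕ → Prop, sat T V (Function.update P q p) i φ

/-- `T ⊨ φ`: satisfaction at time 0 with the empty (default) assignment. -/
def models (T : Set (Trace AP)) (φ : HQPTL AP) : Prop :=
  sat T (fun _ _ => (∅ : Set AP)) (fun _ _ => False) 0 φ

/-- quantifier-free HyperQPTL formulas -/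
def qfree : HQPTL AP → Prop
  | atom _ _ => True
  | prop _ => True
  | not φ => qfree φ
  | or φ ψ => qfree φ ∧ qfree ψ
  | next φ => qfree φ
  | untl φ ψ => qfree φ ∧ qfree ψ
  | _ => False

/-- prenex form: a prefix of (trace or propositional) quantifiers followed by a
quantifier-free body; this is exactly the shape of formulas produced by the
HyperQPTL grammar. -/
def prenex : HQPTL AP → Prop
  | exTr _ φ => prenex φ
  | allTr _ φ => prenex φ
  | exPr _ φ => prenex φ
  | allPr _ φ => prenex φ
  | φ => qfree φ

/-- the ∀* fragment: only universal trace quantifiers in the prefix,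
propositional quantifiers may occur arbitrarily in the prefix. -/
def allFrag : HQPTL AP → Prop
  | allTr _ φ => allFrag φ
  | exPr _ φ => allFrag φ
  | allPr _ φ => allFrag φ
  | φ => qfree φ

/-- trailing block `Q⃗₂ ψ` of propositional quantifiers over a quantifier-free body -/
def eaFrag4 : HQPTL AP → Prop
  | exPr _ φ => eaFrag4 φ
  | allPr _ φ => eaFrag4 φ
  | φ => qfree φ

/-- `∀π′₁…∀π′ₘ Q⃗₂ ψ` -/
def eaFrag3 : HQPTL AP → Prop
  | allTr _ φ => eaFrag3 φ
  | φ => eaFrag4 φ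

/-- `Q⃗₁ ∀π′₁…∀π′ₘ Q⃗₂ ψ` -/
def eaFrag2 : HQPTL AP → Prop
  | exPr _ φ => eaFrag2 φ
  | allPr _ φ => eaFrag2 φ
  | φ => eaFrag3 φ

/-- `∃π₁…∃πₙ Q⃗₁ ∀π′₁…∀π′ₘ Q⃗₂ ψ` -/
def eaFrag1 : HQPTL AP → Prop
  | exTr _ φ => eaFrag1 φ
  | φ => eaFrag2 φ

/-- the ∃*∀* fragment: `Q⃗₀ ∃π₁…∃πₙ Q⃗₁ ∀π′₁…∀π′ₘ Q⃗₂ ψ` with `ψ` quantifier-free -/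
def eaFrag : HQPTL AP → Prop
  | exPr _ φ => eaFrag φ
  | allPr _ φ => eaFrag φ
  | φ => eaFrag1 φ

/-- a HyperQPTL formula is satisfiable if some nonempty trace set satisfies it -/
def satisfiable (φ : HQPTL AP) : Prop :=
  ∃ T : Set (Trace AP), T.Nonempty ∧ models T φ

/-- a natural injective encoding of HyperQPTL formulas over `Fin k` as naturals -/
def enc {k : ℕ} : HQPTL (Fin k) → ℕ
  | atom a π => Nat.pair 0 (Nat.pair a.val π)
  | prop q => Nat.pair 1 q
  | not φ => Nat.pair 2 (enc φ)
  | or φ ψ => Nat.pair 3 (Nat.pair (enc φ) (enc ψ))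
  | next φ => Nat.pair 4 (enc φ)
  | untl φ ψ => Nat.pair 5 (Nat.pair (enc φ) (enc ψ))
  | exTr π φ => Nat.pair 6 (Nat.pair π (enc φ))
  | allTr π φ => Nat.pair 7 (Nat.pair π (enc φ))
  | exPr q φ => Nat.pair 8 (Nat.pair q (enc φ))
  | allPr q φ => Nat.pair 9 (Nat.pair q (enc φ))

end HQPTL

/-! ### QPTL -/

inductive QPTL (AP : Type) : Type
  | atom  : AP → QPTL AP
  | prop  : ℕ → QPTL AP
  | not   : QPTL AP → QPTL AP
  | or    : QPTL AP → QPTL AP → QPTL AP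
  | next  : QPTL AP → QPTL AP
  | untl  : QPTL AP → QPTL AP → QPTL AP
  | exPr  : ℕ → QPTL AP → QPTL AP
  | allPr : ℕ → QPTL AP → QPTL AP

namespace QPTL

variable {AP : Type}

/-- QPTL satisfaction over a single trace `t`. -/
def sat (t : Trace AP) : (ℕ → ℕ → Prop) → ℕ → QPTL AP → Prop
  | P, i, atom a => a ∈ t i
  | P, i, prop q => P q i
  | P, i, not φ => ¬ sat t P i φ
  | P, i, or φ ψ => sat t P i φ ∨ sat t P i ψ
  | P, i, next φ => sat t P (i + 1) φ
  | P, i, untl φ ψ => ∃ j, i ≤ j ∧ sat t P j ψ ∧ ∀ k, i ≤ k → k < j → sat t P k φ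
  | P, i, exPr q φ => ∃ p : ℕ → Prop, sat t (Function.update P q p) i φ
  | P, i, allPr q φ => ∀ p : ℕ → Prop, sat t (Function.update P q p) i φ

def models (t : Trace AP) (φ : QPTL AP) : Prop :=
  sat t (fun _ _ => False) 0 φ

def satisfiable (φ : QPTL AP) : Prop := ∃ t : Trace AP, models t φ

end QPTL

/-- The QPTL formula obtained from a HyperQPTL formula by removing all trace
quantifiers and replacing every atom `a_π` by the atom `a`. -/
def HQPTL.strip {AP : Type} : HQPTL AP → QPTL AP
  | .atom a _ => .atom a
  | .prop q => .prop q
  | .not φ => .not φ.strip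
  | .or φ ψ => .or φ.strip ψ.strip
  | .next φ => .next φ.strip
  | .untl φ ψ => .untl φ.strip ψ.strip
  | .exTr _ φ => φ.strip
  | .allTr _ φ => φ.strip
  | .exPr q φ => .exPr q φ.strip
  | .allPr q φ => .allPr q φ.strip

/-! ### FO[<,E] -/

inductive FOE (AP : Type) : Type
  | patom : AP → ℕ → FOE AP            -- P_a(x)
  | lt    : ℕ → ℕ → FOE AP             -- x < y
  | eq    : ℕ → ℕ → FOE AP             -- x = y
  | el    : ℕ → ℕ → FOE AP             -- E(x,y)
  | not   : FOE AP → FOE AP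
  | or    : FOE AP → FOE AP → FOE AP
  | ex    : ℕ → FOE AP → FOE AP        -- ∃x

namespace FOE

variable {AP : Type}

/-- First-order satisfaction over a trace set `T`; first-order variables range
over `T × ℕ`, modelled by valuations `v : ℕ → Trace AP × ℕ` (quantifiers
restrict the first component to `T`). -/
def sat (T : Set (Trace AP)) : (ℕ → Trace AP × ℕ) → FOE AP → Prop
  | v, patom a x => a ∈ (v x).1 (v x).2
  | v, lt x y => (v x).1 = (v y).1 ∧ (v x).2 < (v y).2
  | v, eq x y => v x = v y
  | v, el x y => (v x).2 = (v y).2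
  | v, not φ => ¬ sat T v φ
  | v, or φ ψ => sat T v φ ∨ sat T v ψ
  | v, ex x φ => ∃ p : Trace AP × ℕ, p.1 ∈ T ∧ sat T (Function.update v x p) φ

def free : FOE AP → Finset ℕ
  | patom _ x => {x}
  | lt x y => {x, y}
  | eq x y => {x, y}
  | el x y => {x, y}
  | not φ => free φ
  | or φ ψ => free φ ∪ free ψ
  | ex x φ => (free φ).erase x

def closed (φ : FOE AP) : Prop := φ.free = ∅

def models (T : Set (Trace AP)) (φ : FOE AP) : Prop :=
  sat T (fun _ => (fun _ => (∅ : Set AP), 0)) φ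

end FOE

/-! ### S1S[E] -/

inductive S1STerm : Type
  | var  : ℕ → S1STerm
  | min  : ℕ → S1STerm
  | succ : S1STerm → S1STerm

namespace S1STerm

/-- value of an S1S[E] term under a first-order valuation -/
def val {AP : Type} (v : ℕ → Trace AP × ℕ) : S1STerm → Trace AP × ℕ
  | var x => v x
  | min x => ((v x).1, 0)
  | succ τ => ((val v τ).1, (val v τ).2 + 1)

def fv : S1STerm → Finset ℕ
  | var x => {x}
  | min x => {x}
  | succ τ => fv τ

def enc : S1STerm → ℕ
  | var x => Nat.pair 0 x
  | min x => Nat.pair 1 x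
  | succ τ => Nat.pair 2 τ.enc

end S1STerm

/-- S1S[E] formulas: second-order variables are either quantifiable variables
(indexed by `ℕ`, via `Sum.inl`) or the designated free variables `X_a`
for `a ∈ AP` (via `Sum.inr`). -/
inductive S1SE (AP : Type) : Type
  | mem  : S1STerm → ℕ ⊕ AP → S1SE AP   -- τ ∈ X
  | eq   : S1STerm → S1STerm → S1SE AP   -- τ = τ'
  | el   : S1STerm → S1STerm → S1SE AP   -- E(τ,τ')
  | not  : S1SE AP → S1SE AP
  | or   : S1SE AP → S1SE AP → S1SE AP
  | exFO : ℕ → S1SE AP → S1SE AP         -- ∃x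
  | exSO : ℕ → S1SE AP → S1SE AP         -- ∃X

namespace S1SE

variable {AP : Type}

/-- S1S[E] satisfaction over a trace set `T`: first-order variables range over
`T × ℕ`, second-order variables over subsets of `T × ℕ`; each designated
variable `X_a` is interpreted as `{(t,n) ∈ T × ℕ | a ∈ t[n]}`. -/
def sat (T : Set (Trace AP)) :
    (ℕ → Trace AP × ℕ) → (ℕ → Set (Trace AP × ℕ)) → S1SE AP → Prop
  | v1, v2, mem τ (Sum.inl X) => τ.val v1 ∈ v2 X
  | v1, v2, mem τ (Sum.inr a) =>
      (τ.val v1).1 ∈ T ∧ a ∈ (τ.val v1).1 (τ.val v1).2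
  | v1, v2, eq τ σ => τ.val v1 = σ.val v1
  | v1, v2, el τ σ => (τ.val v1).2 = (σ.val v1).2
  | v1, v2, not φ => ¬ sat T v1 v2 φ
  | v1, v2, or φ ψ => sat T v1 v2 φ ∨ sat T v1 v2 ψ
  | v1, v2, exFO x φ =>
      ∃ p : Trace AP × ℕ, p.1 ∈ T ∧ sat T (Function.update v1 x p) v2 φ
  | v1, v2, exSO X φ =>
      ∃ A : Set (Trace AP × ℕ), (∀ p ∈ A, p.1 ∈ T) ∧
        sat T v1 (Function.update v2 X A) φ

def freeFO : S1SE AP → Finset ℕ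
  | mem τ _ => τ.fv
  | eq τ σ => τ.fv ∪ σ.fv
  | el τ σ => τ.fv ∪ σ.fv
  | not φ => freeFO φ
  | or φ ψ => freeFO φ ∪ freeFO ψ
  | exFO x φ => (freeFO φ).erase x
  | exSO _ φ => freeFO φ

def freeSO : S1SE AP → Finset ℕ
  | mem _ (Sum.inl X) => {X}
  | mem _ (Sum.inr _) => ∅
  | eq _ _ => ∅
  | el _ _ => ∅
  | not φ => freeSO φ
  | or φ ψ => freeSO φ ∪ freeSO ψ
  | exFO _ φ => freeSO φ
  | exSO X φ => (freeSO φ).erase X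

/-- a closed S1S[E] formula: free variables only among the `X_a` -/
def closed (φ : S1SE AP) : Prop := φ.freeFO = ∅ ∧ φ.freeSO = ∅

def models (T : Set (Trace AP)) (φ : S1SE AP) : Prop :=
  sat T (fun _ => (fun _ => (∅ : Set AP), 0)) (fun _ => (∅ : Set (Trace AP × ℕ))) φ

/-- a natural injective encoding of S1S[E] formulas over `Fin k` as naturals -/
def enc {k : ℕ} : S1SE (Fin k) → ℕ
  | mem τ (Sum.inl X) => Nat.pair 0 (Nat.pair τ.enc X)
  | mem τ (Sum.inr a) => Nat.pair 1 (Nat.pair τ.enc a.val)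
  | eq τ σ => Nat.pair 2 (Nat.pair τ.enc σ.enc)
  | el τ σ => Nat.pair 3 (Nat.pair τ.enc σ.enc)
  | not φ => Nat.pair 4 φ.enc
  | or φ ψ => Nat.pair 5 (Nat.pair φ.enc ψ.enc)
  | exFO x φ => Nat.pair 6 (Nat.pair x φ.enc)
  | exSO X φ => Nat.pair 7 (Nat.pair X φ.enc)

end S1SE

/-! ### Labeled trees -/

/-- An `AP`-labeled tree: an infinite partially ordered set of nodes (given by
the strict ancestor relation `lt`) with a least element `root`, in which the
ancestors of every node are totally ordered and finitely many (so that levels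
are defined), and every node has a direct successor. -/
structure LTree (AP : Type) : Type 1 where
  node : Type
  lt : node → node → Prop
  lt_irrefl : ∀ s, ¬ lt s s
  lt_trans : ∀ a b c, lt a b → lt b c → lt a c
  root : node
  root_min : ∀ s, s = root ∨ lt root s
  anc_total : ∀ s a b, lt a s → lt b s → a = b ∨ lt a b ∨ lt b a
  anc_finite : ∀ s, {a | lt a s}.Finite
  succ_exists : ∀ s, ∃ s', lt s s' ∧ ¬ ∃ c, lt s c ∧ lt c s'
  label : node → Set AP

namespace LTree

variable {AP : Type} (T : LTree AP)

/-- `a` is the direct ancestor of `b` -/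
def DirAnc (a b : T.node) : Prop := T.lt a b ∧ ¬ ∃ c, T.lt a c ∧ T.lt c b

/-- a path: an infinite sequence of nodes, each the direct ancestor of the next -/
def IsPath (p : ℕ → T.node) : Prop := ∀ i, T.DirAnc (p i) (p (i + 1))

/-- an initial path: a path starting at the root -/
def InitPath (p : ℕ → T.node) : Prop := T.IsPath p ∧ p 0 = T.root

/-- the level of a node: its number of ancestors -/
noncomputable def level (s : T.node) : ℕ := (T.anc_finite s).toFinset.card

/-- the collection of node sets that constitute exactly one initial infinite
path of the tree -/
def pathSets : Set (Set T.node) :=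
  { A | ∃ p : ℕ → T.node, T.InitPath p ∧ A = Set.range p }

end LTree

/-- Bisimilarity of `AP`-labeled trees. -/
def Bisimilar {AP : Type} (T₁ T₂ : LTree AP) : Prop :=
  ∃ R : T₁.node → T₂.node → Prop,
    R T₁.root T₂.root ∧
    ∀ s u, R s u →
      T₁.label s = T₂.label u ∧
      (∀ s', T₁.DirAnc s s' → ∃ u', T₂.DirAnc u u' ∧ R s' u') ∧
      (∀ u', T₂.DirAnc u u' → ∃ s', T₁.DirAnc s s' ∧ R s' u')

/-! ### HyperCTL* -/

inductive HCTL (AP : Type) : Type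
  | atom : AP → ℕ → HCTL AP           -- a_π
  | not  : HCTL AP → HCTL AP
  | or   : HCTL AP → HCTL AP → HCTL AP
  | next : HCTL AP → HCTL AP
  | untl : HCTL AP → HCTL AP → HCTL AP
  | ex   : ℕ → HCTL AP → HCTL AP      -- ∃π

namespace HCTL

variable {AP : Type}

/-- HyperCTL* satisfaction `Π,i ⊨_T φ`: `V` assigns initial paths to path
variables, `ε` is the most recently assigned path. -/
def sat (T : LTree AP) : (ℕ → ℕ → T.node) → (ℕ → T.node) → ℕ → HCTL AP → Prop
  | V, ε, i, atom a π => a ∈ T.label (V π i)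
  | V, ε, i, not φ => ¬ sat T V ε i φ
  | V, ε, i, or φ ψ => sat T V ε i φ ∨ sat T V ε i ψ
  | V, ε, i, next φ => sat T V ε (i + 1) φ
  | V, ε, i, untl φ ψ =>
      ∃ j, i ≤ j ∧ sat T V ε j ψ ∧ ∀ k, i ≤ k → k < j → sat T V ε k φ
  | V, ε, i, ex π φ =>
      ∃ p : ℕ → T.node, T.InitPath p ∧ (∀ j ≤ i, p j = ε j) ∧
        sat T (Function.update V π p) p i φ

/-- `T ⊨ φ` -/
def models (T : LTree AP) (φ : HCTL AP) : Prop :=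
  ∀ p : ℕ → T.node, T.InitPath p → sat T (fun _ => p) p 0 φ

def satisfiable (φ : HCTL AP) : Prop := ∃ T : LTree AP, models T φ

def qfree : HCTL AP → Prop
  | atom _ _ => True
  | not φ => qfree φ
  | or φ ψ => qfree φ ∧ qfree ψ
  | next φ => qfree φ
  | untl φ ψ => qfree φ ∧ qfree ψ
  | ex _ _ => False

/-- a natural injective encoding of HyperCTL* formulas over `Fin k` -/
def enc {k : ℕ} : HCTL (Fin k) → ℕ
  | atom a π => Nat.pair 0 (Nat.pair a.val π)
  | not φ => Nat.pair 1 φ.enc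
  | or φ ψ => Nat.pair 2 (Nat.pair φ.enc ψ.enc)
  | next φ => Nat.pair 3 φ.enc
  | untl φ ψ => Nat.pair 4 (Nat.pair φ.enc ψ.enc)
  | ex π φ => Nat.pair 5 (Nat.pair π φ.enc)

end HCTL

/-! ### HyperCTL* in negation normal form -/

inductive NHCTL (AP : Type) : Type
  | pos  : AP → ℕ → NHCTL AP           -- a_π
  | neg  : AP → ℕ → NHCTL AP           -- ¬a_π
  | and  : NHCTL AP → NHCTL AP → NHCTL AP
  | or   : NHCTL AP → NHCTL AP → NHCTL AP
  | next : NHCTL AP → NHCTL AP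
  | untl : NHCTL AP → NHCTL AP → NHCTL AP
  | rel  : NHCTL AP → NHCTL AP → NHCTL AP   -- release
  | ex   : ℕ → NHCTL AP → NHCTL AP
  | all  : ℕ → NHCTL AP → NHCTL AP

namespace NHCTL

variable {AP : Type}

def sat (T : LTree AP) : (ℕ → ℕ → T.node) → (ℕ → T.node) → ℕ → NHCTL AP → Prop
  | V, ε, i, pos a π => a ∈ T.label (V π i)
  | V, ε, i, neg a π => a ∉ T.label (V π i)
  | V, ε, i, and φ ψ => sat T V ε i φ ∧ sat T V ε i ψ
  | V, ε, i, or φ ψ => sat T V ε i φ ∨ sat T V ε i ψ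
  | V, ε, i, next φ => sat T V ε (i + 1) φ
  | V, ε, i, untl φ ψ =>
      ∃ j, i ≤ j ∧ sat T V ε j ψ ∧ ∀ k, i ≤ k → k < j → sat T V ε k φ
  | V, ε, i, rel φ ψ =>
      (∀ j, i ≤ j → sat T V ε j ψ) ∨
      ∃ j, i ≤ j ∧ sat T V ε j φ ∧ ∀ k, i ≤ k → k ≤ j → sat T V ε k ψ
  | V, ε, i, ex π φ =>
      ∃ p : ℕ → T.node, T.InitPath p ∧ (∀ j ≤ i, p j = ε j) ∧
        sat T (Function.update V π p) p i φ
  | V, ε, i, all π φ =>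
      ∀ p : ℕ → T.node, T.InitPath p → (∀ j ≤ i, p j = ε j) →
        sat T (Function.update V π p) p i φ

def models (T : LTree AP) (φ : NHCTL AP) : Prop :=
  ∀ p : ℕ → T.node, T.InitPath p → sat T (fun _ => p) p 0 φ

def satisfiable (φ : NHCTL AP) : Prop := ∃ T : LTree AP, models T φ

/-- contains no existential path quantifier -/
def noEx : NHCTL AP → Prop
  | pos _ _ => True
  | neg _ _ => True
  | and φ ψ => noEx φ ∧ noEx ψ
  | or φ ψ => noEx φ ∧ noEx ψ
  | next φ => noEx φ
  | untl φ ψ => noEx φ ∧ noEx ψ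
  | rel φ ψ => noEx φ ∧ noEx ψ
  | ex _ _ => False
  | all _ φ => noEx φ

/-- contains no universal path quantifier -/
def noAll : NHCTL AP → Prop
  | pos _ _ => True
  | neg _ _ => True
  | and φ ψ => noAll φ ∧ noAll ψ
  | or φ ψ => noAll φ ∧ noAll ψ
  | next φ => noAll φ
  | untl φ ψ => noAll φ ∧ noAll ψ
  | rel φ ψ => noAll φ ∧ noAll ψ
  | ex _ φ => noAll φ
  | all _ _ => False

/-- quantifier-free -/
def qf : NHCTL AP → Prop
  | pos _ _ => True
  | neg _ _ => True
  | and φ ψ => qf φ ∧ qf ψ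
  | or φ ψ => qf φ ∧ qf ψ
  | next φ => qf φ
  | untl φ ψ => qf φ ∧ qf ψ
  | rel φ ψ => qf φ ∧ qf ψ
  | ex _ _ => False
  | all _ _ => False

/-- the ∃*∀* fragment: no existential path quantifier occurs in the scope of a
universal path quantifier -/
def eaFrag : NHCTL AP → Prop
  | pos _ _ => True
  | neg _ _ => True
  | and φ ψ => eaFrag φ ∧ eaFrag ψ
  | or φ ψ => eaFrag φ ∧ eaFrag ψ
  | next φ => eaFrag φ
  | untl φ ψ => eaFrag φ ∧ eaFrag ψ
  | rel φ ψ => eaFrag φ ∧ eaFrag ψ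
  | ex _ φ => eaFrag φ
  | all _ φ => noEx φ

/-- a natural injective encoding of NNF HyperCTL* formulas over `Fin k` -/
def enc {k : ℕ} : NHCTL (Fin k) → ℕ
  | pos a π => Nat.pair 0 (Nat.pair a.val π)
  | neg a π => Nat.pair 1 (Nat.pair a.val π)
  | and φ ψ => Nat.pair 2 (Nat.pair φ.enc ψ.enc)
  | or φ ψ => Nat.pair 3 (Nat.pair φ.enc ψ.enc)
  | next φ => Nat.pair 4 φ.enc
  | untl φ ψ => Nat.pair 5 (Nat.pair φ.enc ψ.enc)
  | rel φ ψ => Nat.pair 6 (Nat.pair φ.enc ψ.enc)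
  | ex π φ => Nat.pair 7 (Nat.pair π φ.enc)
  | all π φ => Nat.pair 8 (Nat.pair π φ.enc)

end NHCTL

/-! ### MSO[E] and MPL[E] over labeled trees -/

inductive MSOE (AP : Type) : Type
  | patom : AP → ℕ → MSOE AP           -- P_a(x)
  | lt    : ℕ → ℕ → MSOE AP            -- x < y  (proper ancestor)
  | eq    : ℕ → ℕ → MSOE AP            -- x = y
  | el    : ℕ → ℕ → MSOE AP            -- E(x,y)
  | mem   : ℕ → ℕ → MSOE AP            -- x ∈ X
  | not   : MSOE AP → MSOE AP
  | or    : MSOE AP → MSOE AP → MSOE AP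
  | exFO  : ℕ → MSOE AP → MSOE AP      -- ∃x
  | exSO  : ℕ → MSOE AP → MSOE AP      -- ∃X

namespace MSOE

variable {AP : Type}

/-- satisfaction over a labeled tree, where second-order quantifiers range over
the collection `SO` of admissible node sets -/
def sat (T : LTree AP) (SO : Set (Set T.node)) :
    (ℕ → T.node) → (ℕ → Set T.node) → MSOE AP → Prop
  | v1, v2, patom a x => a ∈ T.label (v1 x)
  | v1, v2, lt x y => T.lt (v1 x) (v1 y)
  | v1, v2, eq x y => v1 x = v1 y
  | v1, v2, el x y => T.level (v1 x) = T.level (v1 y)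
  | v1, v2, mem x X => v1 x ∈ v2 X
  | v1, v2, not φ => ¬ sat T SO v1 v2 φ
  | v1, v2, or φ ψ => sat T SO v1 v2 φ ∨ sat T SO v1 v2 ψ
  | v1, v2, exFO x φ => ∃ s : T.node, sat T SO (Function.update v1 x s) v2 φ
  | v1, v2, exSO X φ => ∃ A ∈ SO, sat T SO v1 (Function.update v2 X A) φ

def freeFO : MSOE AP → Finset ℕ
  | patom _ x => {x}
  | lt x y => {x, y}
  | eq x y => {x, y}
  | el x y => {x, y}
  | mem x _ => {x}
  | not φ => freeFO φ
  | or φ ψ => freeFO φ ∪ freeFO ψ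
  | exFO x φ => (freeFO φ).erase x
  | exSO _ φ => freeFO φ

def freeSO : MSOE AP → Finset ℕ
  | patom _ _ => ∅
  | lt _ _ => ∅
  | eq _ _ => ∅
  | el _ _ => ∅
  | mem _ X => {X}
  | not φ => freeSO φ
  | or φ ψ => freeSO φ ∪ freeSO ψ
  | exFO _ φ => freeSO φ
  | exSO X φ => (freeSO φ).erase X

def closed (φ : MSOE AP) : Prop := φ.freeFO = ∅ ∧ φ.freeSO = ∅

/-- `T ⊨ φ` with MPL[E] semantics: second-order quantification restricted to
sets of nodes constituting exactly one initial infinite path -/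
def modelsMPL (T : LTree AP) (φ : MSOE AP) : Prop :=
  sat T T.pathSets (fun _ => T.root) (fun _ => (∅ : Set T.node)) φ

/-- `T ⊨ φ` with full MSO[E] semantics: second-order quantification over
arbitrary sets of nodes -/
def modelsMSO (T : LTree AP) (φ : MSOE AP) : Prop :=
  sat T Set.univ (fun _ => T.root) (fun _ => (∅ : Set T.node)) φ

end MSOE

/-! ### HyperQCTL* -/

inductive HQCTL (AP : Type) : Type
  | atom  : AP → ℕ → HQCTL AP          -- a_π
  | qatom : ℕ → ℕ → HQCTL AP           -- q_π
  | not   : HQCTL AP → HQCTL AP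
  | or    : HQCTL AP → HQCTL AP → HQCTL AP
  | next  : HQCTL AP → HQCTL AP
  | untl  : HQCTL AP → HQCTL AP → HQCTL AP
  | ex    : ℕ → HQCTL AP → HQCTL AP    -- ∃π
  | exPr  : ℕ → HQCTL AP → HQCTL AP    -- ∃q

namespace HQCTL

variable {AP : Type}

/-- HyperQCTL* satisfaction: `Q` records, for every quantified proposition, the
set of tree nodes currently labeled by it (a relabeling of the tree). -/
def sat (T : LTree AP) : (ℕ → Set T.node) → (ℕ → ℕ → T.node) → (ℕ → T.node) →
    ℕ → HQCTL AP → Prop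
  | Q, V, ε, i, atom a π => a ∈ T.label (V π i)
  | Q, V, ε, i, qatom q π => V π i ∈ Q q
  | Q, V, ε, i, not φ => ¬ sat T Q V ε i φ
  | Q, V, ε, i, or φ ψ => sat T Q V ε i φ ∨ sat T Q V ε i ψ
  | Q, V, ε, i, next φ => sat T Q V ε (i + 1) φ
  | Q, V, ε, i, untl φ ψ =>
      ∃ j, i ≤ j ∧ sat T Q V ε j ψ ∧ ∀ k, i ≤ k → k < j → sat T Q V ε k φ
  | Q, V, ε, i, ex π φ =>
      ∃ p : ℕ → T.node, T.InitPath p ∧ (∀ j ≤ i, p j = ε j) ∧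
        sat T Q (Function.update V π p) p i φ
  | Q, V, ε, i, exPr q φ =>
      ∃ A : Set T.node, sat T (Function.update Q q A) V ε i φ

def models (T : LTree AP) (φ : HQCTL AP) : Prop :=
  ∀ p : ℕ → T.node, T.InitPath p →
    sat T (fun _ => (∅ : Set T.node)) (fun _ => p) p 0 φ

end HQCTL

section TreeLemmas

namespace LTree

variable {AP : Type} (T : LTree AP)

lemma path_lt {p : ℕ → T.node} (hp : T.IsPath p) : ∀ {i j : ℕ}, i < j → T.lt (p i) (p j) := by
  intro i j
  induction j with
  | zero => intro h; exact absurd h (by omega)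
  | succ j ih =>
    intro h
    rcases Nat.lt_succ_iff_lt_or_eq.mp h with h' | h'
    · exact T.lt_trans _ _ _ (ih h') (hp j).1
    · subst h'; exact (hp i).1

lemma not_lt_root (a : T.node) : ¬ T.lt a T.root := by
  intro h
  rcases T.root_min a with rfl | h'
  · exact T.lt_irrefl _ h
  · exact T.lt_irrefl _ (T.lt_trans _ _ _ h h')

lemma level_strictMono {a b : T.node} (h : T.lt a b) : T.level a < T.level b := by
  apply Finset.card_lt_card
  constructor
  · intro c hc
    simp only [Set.Finite.mem_toFinset, Set.mem_setOf_eq] at *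
    exact T.lt_trans _ _ _ hc h
  · intro hsub
    have := hsub (by simp only [Set.Finite.mem_toFinset, Set.mem_setOf_eq]; exact h)
    simp only [Set.Finite.mem_toFinset, Set.mem_setOf_eq] at this
    exact T.lt_irrefl _ this

lemma level_root : T.level T.root = 0 := by
  unfold level
  rw [Finset.card_eq_zero]
  ext a
  simp only [Set.Finite.mem_toFinset, Set.mem_setOf_eq, Finset.notMem_empty, iff_false]
  exact T.not_lt_root a

lemma dirAnc_anc {s u : T.node} (h : T.DirAnc s u) :
    {a | T.lt a u} = insert s {a | T.lt a s} := by
  ext a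
  simp only [Set.mem_setOf_eq, Set.mem_insert_iff]
  constructor
  · intro ha
    rcases T.anc_total u a s ha h.1 with h1 | h1 | h1
    · exact Or.inl h1
    · exact Or.inr h1
    · exact absurd ⟨a, h1, ha⟩ h.2
  · rintro (rfl | ha)
    · exact h.1
    · exact T.lt_trans _ _ _ ha h.1

lemma level_dirAnc {s u : T.node} (h : T.DirAnc s u) : T.level u = T.level s + 1 := by
  classical
  unfold level
  have h1 : (T.anc_finite u).toFinset = insert s (T.anc_finite s).toFinset := by
    ext a
    simp only [Set.Finite.mem_toFinset, Finset.mem_insert]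
    rw [show {a | T.lt a u} = insert s {a | T.lt a s} from T.dirAnc_anc h]
    simp [Set.mem_insert_iff]
  rw [h1, Finset.card_insert_of_notMem]
  simp only [Set.Finite.mem_toFinset, Set.mem_setOf_eq]
  exact T.lt_irrefl s

lemma level_initPath {p : ℕ → T.node} (hp : T.InitPath p) : ∀ i, T.level (p i) = i := by
  intro i
  induction i with
  | zero => rw [hp.2]; exact T.level_root
  | succ i ih => rw [T.level_dirAnc (hp.1 i), ih]

/-- forward extension from a node -/
noncomputable def fwd (s : T.node) : ℕ → T.node
  | 0 => s
  | n + 1 => Classical.choose (T.succ_exists (fwd s n))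

lemma fwd_zero (s : T.node) : T.fwd s 0 = s := rfl

lemma fwd_dirAnc (s : T.node) (n : ℕ) : T.DirAnc (T.fwd s n) (T.fwd s (n + 1)) := by
  have h := Classical.choose_spec (T.succ_exists (T.fwd s n))
  exact ⟨h.1, h.2⟩

lemma exists_initPath_through' :
    ∀ (k : ℕ) (s : T.node), T.level s = k →
      ∃ p : ℕ → T.node, T.InitPath p ∧ p (T.level s) = s := by
  intro k
  induction k using Nat.strong_induction_on with
  | _ k ih =>
    intro s hn
    match k, hn with
    | 0, hn =>
      refine ⟨T.fwd s, ⟨fun i => T.fwd_dirAnc s i, ?_⟩, by rw [hn, T.fwd_zero]⟩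
      rcases T.root_min s with rfl | h
      · rfl
      · exfalso
        have := T.level_strictMono h
        rw [hn, T.level_root] at this
        omega
    | k + 1, hn =>
      have hne : ((T.anc_finite s).toFinset).Nonempty := by
        rcases T.root_min s with rfl | h
        · rw [T.level_root] at hn; omega
        · exact ⟨T.root, by simp only [Set.Finite.mem_toFinset, Set.mem_setOf_eq]; exact h⟩
      obtain ⟨u, hu, humax⟩ := Finset.exists_max_image _ T.level hne
      simp only [Set.Finite.mem_toFinset, Set.mem_setOf_eq] at hu
      have hdir : T.DirAnc u s := by
        refine ⟨hu, ?_⟩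
        rintro ⟨c, hc1, hc2⟩
        have hcu := T.level_strictMono hc1
        have := humax c (by simp only [Set.Finite.mem_toFinset, Set.mem_setOf_eq]; exact hc2)
        omega
      have hlu : T.level u = k := by
        have := T.level_dirAnc hdir; omega
      obtain ⟨q, hq, hqk⟩ := ih k (by omega) u hlu
      rw [hlu] at hqk
      refine ⟨fun n => if n ≤ k then q n else T.fwd s (n - (k + 1)), ⟨?_, ?_⟩, ?_⟩
      · intro i
        dsimp only
        by_cases h1 : i + 1 ≤ k
        · rw [if_pos (by omega : i ≤ k), if_pos h1]
          exact hq.1 i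
        · by_cases h2 : i ≤ k
          · have hik : i = k := by omega
            subst hik
            rw [if_pos h2, if_neg h1, hqk,
              show i + 1 - (i + 1) = 0 from by omega, T.fwd_zero]
            exact hdir
          · rw [if_neg h2, if_neg h1,
              show i + 1 - (k + 1) = (i - (k + 1)) + 1 from by omega]
            exact T.fwd_dirAnc s _
      · dsimp only
        rw [if_pos (Nat.zero_le k)]
        exact hq.2
      · dsimp only
        rw [hn, if_neg (by omega : ¬ k + 1 ≤ k),
          show k + 1 - (k + 1) = 0 from by omega, T.fwd_zero]

lemma exists_initPath_through (s : T.node) :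
    ∃ p : ℕ → T.node, T.InitPath p ∧ p (T.level s) = s :=
  T.exists_initPath_through' (T.level s) s rfl

lemma exists_initPath : ∃ p : ℕ → T.node, T.InitPath p := by
  obtain ⟨p, hp, -⟩ := T.exists_initPath_through T.root
  exact ⟨p, hp⟩

lemma anc_initPath {p : ℕ → T.node} (hp : T.InitPath p) :
    ∀ j a, T.lt a (p j) → ∃ i < j, a = p i := by
  intro j
  induction j with
  | zero => intro a ha; rw [hp.2] at ha; exact absurd ha (T.not_lt_root a)
  | succ j ih =>
    intro a ha
    have h2 := T.dirAnc_anc (hp.1 j)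
    rw [Set.ext_iff] at h2
    rcases (h2 a).mp ha with rfl | ha'
    · exact ⟨j, by omega, rfl⟩
    · obtain ⟨i, hi, rfl⟩ := ih a ha'
      exact ⟨i, by omega, rfl⟩

lemma lt_iff_path : ∀ s u : T.node, T.lt s u ↔
    ∃ p, T.InitPath p ∧ ∃ i j, i < j ∧ p i = s ∧ p j = u := by
  intro s u
  constructor
  · intro h
    obtain ⟨p, hp, hpu⟩ := T.exists_initPath_through u
    obtain ⟨i, hi, rfl⟩ := T.anc_initPath hp (T.level u) s (by rw [hpu]; exact h)
    exact ⟨p, hp, i, T.level u, hi, rfl, hpu⟩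
  · rintro ⟨p, hp, i, j, hij, rfl, rfl⟩
    exact T.path_lt hp.1 hij

end LTree

end TreeLemmas
section Gadgets

namespace HQCTL

variable {AP : Type}

/-- conjunction -/
def hand (φ ψ : HQCTL AP) : HQCTL AP := .not (.or (.not φ) (.not ψ))

/-- a true formula -/
def tru (a₀ : AP) : HQCTL AP := .or (.atom a₀ 0) (.not (.atom a₀ 0))

/-- eventually -/
def hF (a₀ : AP) (χ : HQCTL AP) : HQCTL AP := .untl (tru a₀) χ

/-- node equality of two paths at the current time, via propositional quantification -/
def heq (π π' : ℕ) : HQCTL AP :=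
  .not (.exPr 0 (.not (.or (hand (.qatom 0 π) (.qatom 0 π'))
    (hand (.not (.qatom 0 π)) (.not (.qatom 0 π'))))))

variable {T : LTree AP} {Q : ℕ → Set T.node} {V : ℕ → ℕ → T.node} {ε : ℕ → T.node} {i : ℕ}

lemma sat_hand {φ ψ : HQCTL AP} :
    sat T Q V ε i (hand φ ψ) ↔ sat T Q V ε i φ ∧ sat T Q V ε i ψ := by
  simp only [hand, sat]
  tauto

lemma sat_tru (a₀ : AP) : sat T Q V ε i (tru a₀) := by
  simp only [tru, sat]
  tauto

lemma sat_hF {a₀ : AP} {χ : HQCTL AP} :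
    sat T Q V ε i (hF a₀ χ) ↔ ∃ j, i ≤ j ∧ sat T Q V ε j χ := by
  simp only [hF, sat]
  constructor
  · rintro ⟨j, h1, h2, -⟩; exact ⟨j, h1, h2⟩
  · rintro ⟨j, h1, h2⟩; exact ⟨j, h1, h2, fun k _ _ => sat_tru (Q := Q) (V := V) (ε := ε) (i := k) a₀⟩

lemma sat_heq {π π' : ℕ} : sat T Q V ε i (heq π π') ↔ V π i = V π' i := by
  simp only [heq, sat, sat_hand]
  constructor
  · intro h
    by_contra hne
    apply h
    refine ⟨{V π i}, ?_⟩
    simp only [sat, Function.update_self, Set.mem_singleton_iff]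
    tauto
  · intro h hx
    obtain ⟨A, hA⟩ := hx
    apply hA
    simp only [sat, Function.update_self, h]
    tauto

lemma sat_ex0 (hε : ε 0 = T.root) {π : ℕ} {χ : HQCTL AP} :
    sat T Q V ε 0 (.ex π χ) ↔
      ∃ p, T.InitPath p ∧ sat T Q (Function.update V π p) p 0 χ := by
  simp only [sat]
  constructor
  · rintro ⟨p, hp, -, h⟩; exact ⟨p, hp, h⟩
  · rintro ⟨p, hp, h⟩
    refine ⟨p, hp, ?_, h⟩
    intro j hj
    have : j = 0 := by omega
    subst this
    rw [hp.2, hε]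

end HQCTL

end Gadgets
section Translation

namespace HQCTL

variable {AP : Type}

variable {T : LTree AP} {Q : ℕ → Set T.node} {V : ℕ → ℕ → T.node} {ε : ℕ → T.node} {i : ℕ}

lemma sat_atom {a : AP} {π : ℕ} : sat T Q V ε i (.atom a π) ↔ a ∈ T.label (V π i) := Iff.rfl
lemma sat_qatom {q π : ℕ} : sat T Q V ε i (.qatom q π) ↔ V π i ∈ Q q := Iff.rfl
lemma sat_not {φ : HQCTL AP} : sat T Q V ε i (.not φ) ↔ ¬ sat T Q V ε i φ := Iff.rfl
lemma sat_or {φ ψ : HQCTL AP} :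
    sat T Q V ε i (.or φ ψ) ↔ sat T Q V ε i φ ∨ sat T Q V ε i ψ := Iff.rfl
lemma sat_next {φ : HQCTL AP} : sat T Q V ε i (.next φ) ↔ sat T Q V ε (i + 1) φ := Iff.rfl
lemma sat_exPr {q : ℕ} {φ : HQCTL AP} :
    sat T Q V ε i (.exPr q φ) ↔ ∃ A : Set T.node, sat T (Function.update Q q A) V ε i φ :=
  Iff.rfl

lemma sat_exex0 (hε : ε 0 = T.root) {χ : HQCTL AP} :
    sat T Q V ε 0 (.ex 0 (.ex 1 χ)) ↔
      ∃ p p', T.InitPath p ∧ T.InitPath p' ∧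
        sat T Q (Function.update (Function.update V 0 p) 1 p') p' 0 χ := by
  rw [sat_ex0 hε]
  constructor
  · rintro ⟨p, hp, h⟩
    rw [sat_ex0 hp.2] at h
    obtain ⟨p', hp', h⟩ := h
    exact ⟨p, p', hp, hp', h⟩
  · rintro ⟨p, p', hp, hp', h⟩
    refine ⟨p, hp, ?_⟩
    rw [sat_ex0 hp.2]
    exact ⟨p', hp', h⟩

lemma sat_exF0 (hε : ε 0 = T.root) {a₀ : AP} {χ : HQCTL AP} :
    sat T Q V ε 0 (.ex 0 (hF a₀ χ)) ↔
      ∃ p, T.InitPath p ∧ ∃ j, sat T Q (Function.update V 0 p) p j χ := by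
  rw [sat_ex0 hε]
  apply exists_congr
  intro p
  apply and_congr_right
  intro hp
  rw [sat_hF]
  exact ⟨fun ⟨j, _, h⟩ => ⟨j, h⟩, fun ⟨j, h⟩ => ⟨j, Nat.zero_le j, h⟩⟩

/-- `q` denotes a singleton set of nodes -/
def sing (a₀ : AP) (q : ℕ) : HQCTL AP :=
  hand (.ex 0 (hF a₀ (.qatom q 0)))
    (hand
      (.not (.ex 0 (.ex 1 (hF a₀ (hand (.qatom q 0) (.next (hF a₀ (.qatom q 1))))))))
      (.not (.ex 0 (.ex 1 (hF a₀
        (hand (.qatom q 0) (hand (.qatom q 1) (.not (heq 0 1)))))))))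

lemma sing_iff (a₀ : AP) (q : ℕ) (hε : ε 0 = T.root) :
    sat T Q V ε 0 (sing a₀ q) ↔ ∃ s : T.node, Q q = {s} := by
  have hS1 : sat T Q V ε 0 (.ex 0 (hF a₀ (.qatom q 0))) ↔
      ∃ p, T.InitPath p ∧ ∃ j, p j ∈ Q q := by
    rw [sat_exF0 hε]
    apply exists_congr; intro p; apply and_congr_right; intro hp
    apply exists_congr; intro j
    rw [sat_qatom, Function.update_self]
  have hS2 : sat T Q V ε 0
      (.ex 0 (.ex 1 (hF a₀ (hand (.qatom q 0) (.next (hF a₀ (.qatom q 1))))))) ↔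
      ∃ p p', T.InitPath p ∧ T.InitPath p' ∧
        ∃ j j', j < j' ∧ p j ∈ Q q ∧ p' j' ∈ Q q := by
    rw [sat_exex0 hε]
    apply exists_congr; intro p; apply exists_congr; intro p'
    apply and_congr_right; intro hp; apply and_congr_right; intro hp'
    rw [sat_hF]
    constructor
    · rintro ⟨j, -, h⟩
      rw [sat_hand, sat_qatom, sat_next, sat_hF] at h
      obtain ⟨h1, j', hj', h2⟩ := h
      rw [sat_qatom, Function.update_self] at h2
      rw [Function.update_of_ne (by omega : (0:ℕ) ≠ 1), Function.update_self] at h1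
      exact ⟨j, j', by omega, h1, h2⟩
    · rintro ⟨j, j', hjj, h1, h2⟩
      refine ⟨j, Nat.zero_le j, ?_⟩
      rw [sat_hand, sat_qatom, sat_next, sat_hF]
      refine ⟨?_, j', by omega, ?_⟩
      · rw [Function.update_of_ne (by omega : (0:ℕ) ≠ 1), Function.update_self]
        exact h1
      · rw [sat_qatom, Function.update_self]
        exact h2
  have hS3 : sat T Q V ε 0
      (.ex 0 (.ex 1 (hF a₀ (hand (.qatom q 0) (hand (.qatom q 1) (.not (heq 0 1))))))) ↔
      ∃ p p', T.InitPath p ∧ T.InitPath p' ∧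
        ∃ j, p j ∈ Q q ∧ p' j ∈ Q q ∧ p j ≠ p' j := by
    rw [sat_exex0 hε]
    apply exists_congr; intro p; apply exists_congr; intro p'
    apply and_congr_right; intro hp; apply and_congr_right; intro hp'
    rw [sat_hF]
    constructor
    · rintro ⟨j, -, h⟩
      rw [sat_hand, sat_hand, sat_qatom, sat_qatom, sat_not, sat_heq,
        Function.update_of_ne (by omega : (0:ℕ) ≠ 1), Function.update_self,
        Function.update_self] at h
      exact ⟨j, h.1, h.2.1, h.2.2⟩
    · rintro ⟨j, h1, h2, h3⟩
      refine ⟨j, Nat.zero_le j, ?_⟩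
      rw [sat_hand, sat_hand, sat_qatom, sat_qatom, sat_not, sat_heq,
        Function.update_of_ne (by omega : (0:ℕ) ≠ 1), Function.update_self,
        Function.update_self]
      exact ⟨h1, h2, h3⟩
  have hsing : sat T Q V ε 0 (sing a₀ q) ↔
      ((∃ p, T.InitPath p ∧ ∃ j, p j ∈ Q q) ∧
        (¬ ∃ p p', T.InitPath p ∧ T.InitPath p' ∧
          ∃ j j', j < j' ∧ p j ∈ Q q ∧ p' j' ∈ Q q) ∧
        (¬ ∃ p p', T.InitPath p ∧ T.InitPath p' ∧
          ∃ j, p j ∈ Q q ∧ p' j ∈ Q q ∧ p j ≠ p' j)) := by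
    simp only [sing]
    rw [sat_hand, sat_hand, sat_not, sat_not, hS1, hS2, hS3]
  rw [hsing]
  constructor
  · rintro ⟨⟨p, hp, j, hj⟩, h2, h3⟩
    refine ⟨p j, ?_⟩
    ext u
    simp only [Set.mem_singleton_iff]
    constructor
    · intro hu
      obtain ⟨pu, hpu, hpuu⟩ := T.exists_initPath_through u
      rcases lt_trichotomy j (T.level u) with h | h | h
      · exact absurd ⟨p, pu, hp, hpu, j, T.level u, h, hj, by rw [hpuu]; exact hu⟩ h2
      · by_contra hne
        refine h3 ⟨p, pu, hp, hpu, j, hj, ?_, ?_⟩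
        · rw [← h] at hpuu; rw [hpuu]; exact hu
        · rw [← h] at hpuu; rw [hpuu]; exact fun hh => hne hh.symm
      · exact absurd ⟨pu, p, hpu, hp, T.level u, j, h, by rw [hpuu]; exact hu, hj⟩ h2
    · rintro rfl; exact hj
  · rintro ⟨s, hs⟩
    obtain ⟨p, hp, hps⟩ := T.exists_initPath_through s
    refine ⟨⟨p, hp, T.level s, by rw [hps, hs]; exact rfl⟩, ?_, ?_⟩
    · rintro ⟨p1, p2, hp1, hp2, j, j', hjj, h1, h2⟩
      rw [hs, Set.mem_singleton_iff] at h1 h2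
      have e1 := T.level_initPath hp1 j
      have e2 := T.level_initPath hp2 j'
      rw [h1] at e1; rw [h2] at e2
      omega
    · rintro ⟨p1, p2, hp1, hp2, j, h1, h2, h3⟩
      rw [hs, Set.mem_singleton_iff] at h1 h2
      rw [h1, h2] at h3
      exact h3 rfl

/-- the translation of MPL[E] into HyperQCTL*: FO variable `x` becomes the
quantified proposition `x+1` (denoting a singleton set of nodes), SO variable
`X` becomes the path variable `X+2`; path variables `0`, `1` and proposition
variable `0` are auxiliary. -/
def tr (a₀ : AP) : MSOE AP → HQCTL AP
  | .patom a x => .ex 0 (hF a₀ (hand (.qatom (x + 1) 0) (.atom a 0)))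
  | .lt x y => .ex 0 (hF a₀ (hand (.qatom (x + 1) 0) (.next (hF a₀ (.qatom (y + 1) 0)))))
  | .eq x y => .ex 0 (hF a₀ (hand (.qatom (x + 1) 0) (.qatom (y + 1) 0)))
  | .el x y => .ex 0 (.ex 1 (hF a₀ (hand (.qatom (x + 1) 0) (.qatom (y + 1) 1))))
  | .mem x X => hF a₀ (.qatom (x + 1) (X + 2))
  | .not φ => .not (tr a₀ φ)
  | .or φ ψ => .or (tr a₀ φ) (tr a₀ ψ)
  | .exFO x φ => .exPr (x + 1) (hand (sing a₀ (x + 1)) (tr a₀ φ))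
  | .exSO X φ => .ex (X + 2) (tr a₀ φ)

theorem tr_correct (a₀ : AP) (T : LTree AP) :
    ∀ (φ : MSOE AP) (v1 : ℕ → T.node) (v2 : ℕ → Set T.node)
      (Q : ℕ → Set T.node) (V : ℕ → ℕ → T.node) (ε : ℕ → T.node),
      ε 0 = T.root →
      (∀ x ∈ φ.freeFO, Q (x + 1) = {v1 x}) →
      (∀ X ∈ φ.freeSO, ∃ p, T.InitPath p ∧ V (X + 2) = p ∧ v2 X = Set.range p) →
      (MSOE.sat T T.pathSets v1 v2 φ ↔ HQCTL.sat T Q V ε 0 (tr a₀ φ)) := by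
  intro φ
  induction φ with
  | patom a x =>
    intro v1 v2 Q V ε hε h1 h2
    have hx : Q (x + 1) = {v1 x} := h1 x (by simp [MSOE.freeFO])
    show a ∈ T.label (v1 x) ↔ _
    rw [tr, sat_exF0 hε]
    constructor
    · intro h
      obtain ⟨p, hp, hps⟩ := T.exists_initPath_through (v1 x)
      refine ⟨p, hp, T.level (v1 x), ?_⟩
      rw [sat_hand, sat_qatom, sat_atom, Function.update_self, hx, hps]
      exact ⟨rfl, h⟩
    · rintro ⟨p, hp, j, h⟩
      rw [sat_hand, sat_qatom, sat_atom, Function.update_self, hx,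
        Set.mem_singleton_iff] at h
      rw [← h.1]
      exact h.2
  | lt x y =>
    intro v1 v2 Q V ε hε h1 h2
    have hx : Q (x + 1) = {v1 x} := h1 x (by simp [MSOE.freeFO])
    have hy : Q (y + 1) = {v1 y} := h1 y (by simp [MSOE.freeFO])
    show T.lt (v1 x) (v1 y) ↔ _
    rw [tr, sat_exF0 hε, T.lt_iff_path (v1 x) (v1 y)]
    constructor
    · rintro ⟨p, hp, i, j, hij, hpi, hpj⟩
      refine ⟨p, hp, i, ?_⟩
      rw [sat_hand, sat_qatom, sat_next, sat_hF, Function.update_self, hx, hpi]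
      refine ⟨rfl, j, by omega, ?_⟩
      rw [sat_qatom, Function.update_self, hy, hpj]
      exact rfl
    · rintro ⟨p, hp, j, h⟩
      rw [sat_hand, sat_qatom, sat_next, sat_hF, Function.update_self, hx,
        Set.mem_singleton_iff] at h
      obtain ⟨hq, j', hjj, hn⟩ := h
      rw [sat_qatom, Function.update_self, hy, Set.mem_singleton_iff] at hn
      exact ⟨p, hp, j, j', by omega, hq, hn⟩
  | eq x y =>
    intro v1 v2 Q V ε hε h1 h2
    have hx : Q (x + 1) = {v1 x} := h1 x (by simp [MSOE.freeFO])
    have hy : Q (y + 1) = {v1 y} := h1 y (by simp [MSOE.freeFO])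
    show v1 x = v1 y ↔ _
    rw [tr, sat_exF0 hε]
    constructor
    · intro h
      obtain ⟨p, hp, hps⟩ := T.exists_initPath_through (v1 x)
      refine ⟨p, hp, T.level (v1 x), ?_⟩
      rw [sat_hand, sat_qatom, sat_qatom, Function.update_self, hx, hy, hps, h]
      exact ⟨rfl, rfl⟩
    · rintro ⟨p, hp, j, h⟩
      rw [sat_hand, sat_qatom, sat_qatom, Function.update_self, hx, hy,
        Set.mem_singleton_iff, Set.mem_singleton_iff] at h
      rw [← h.1, ← h.2]
  | el x y =>
    intro v1 v2 Q V ε hε h1 h2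
    have hx : Q (x + 1) = {v1 x} := h1 x (by simp [MSOE.freeFO])
    have hy : Q (y + 1) = {v1 y} := h1 y (by simp [MSOE.freeFO])
    show T.level (v1 x) = T.level (v1 y) ↔ _
    rw [tr, sat_exex0 hε]
    constructor
    · intro h
      obtain ⟨p, hp, hps⟩ := T.exists_initPath_through (v1 x)
      obtain ⟨p', hp', hps'⟩ := T.exists_initPath_through (v1 y)
      refine ⟨p, p', hp, hp', ?_⟩
      rw [sat_hF]
      refine ⟨T.level (v1 x), Nat.zero_le _, ?_⟩
      rw [sat_hand, sat_qatom, sat_qatom,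
        Function.update_of_ne (by omega : (0:ℕ) ≠ 1), Function.update_self,
        Function.update_self, hx, hy, hps, h, hps']
      exact ⟨rfl, rfl⟩
    · rintro ⟨p, p', hp, hp', h⟩
      rw [sat_hF] at h
      obtain ⟨j, -, h⟩ := h
      rw [sat_hand, sat_qatom, sat_qatom,
        Function.update_of_ne (by omega : (0:ℕ) ≠ 1), Function.update_self,
        Function.update_self, hx, hy, Set.mem_singleton_iff, Set.mem_singleton_iff] at h
      rw [← h.1, ← h.2, T.level_initPath hp j, T.level_initPath hp' j]
  | mem x X =>
    intro v1 v2 Q V ε hε h1 h2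
    have hx : Q (x + 1) = {v1 x} := h1 x (by simp [MSOE.freeFO])
    obtain ⟨p, hp, hV, hv2⟩ := h2 X (by simp [MSOE.freeSO])
    show v1 x ∈ v2 X ↔ _
    rw [tr, sat_hF, hv2]
    constructor
    · rintro ⟨j, hj⟩
      refine ⟨j, Nat.zero_le j, ?_⟩
      rw [sat_qatom, hV, hx, hj]
      exact rfl
    · rintro ⟨j, -, hj⟩
      rw [sat_qatom, hV, hx, Set.mem_singleton_iff] at hj
      exact ⟨j, hj⟩
  | not φ ih =>
    intro v1 v2 Q V ε hε h1 h2
    show ¬ _ ↔ _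
    rw [tr, sat_not, ih v1 v2 Q V ε hε h1 h2]
  | or φ ψ ihφ ihψ =>
    intro v1 v2 Q V ε hε h1 h2
    simp only [MSOE.freeFO, MSOE.freeSO, Finset.mem_union] at h1 h2
    show _ ∨ _ ↔ _
    rw [tr, sat_or,
      ihφ v1 v2 Q V ε hε (fun x hx => h1 x (Or.inl hx)) (fun X hX => h2 X (Or.inl hX)),
      ihψ v1 v2 Q V ε hε (fun x hx => h1 x (Or.inr hx)) (fun X hX => h2 X (Or.inr hX))]
  | exFO x φ ih =>
    intro v1 v2 Q V ε hε h1 h2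
    show (∃ s, MSOE.sat T T.pathSets (Function.update v1 x s) v2 φ) ↔ _
    rw [tr, sat_exPr]
    constructor
    · rintro ⟨s, hs⟩
      refine ⟨{s}, ?_⟩
      rw [sat_hand]
      constructor
      · rw [sing_iff a₀ (x + 1) hε]
        exact ⟨s, Function.update_self _ _ _⟩
      · rw [← ih (Function.update v1 x s) v2 (Function.update Q (x + 1) {s}) V ε hε ?_ ?_]
        · exact hs
        · intro y hy
          by_cases hxy : y = x
          · subst hxy
            rw [Function.update_self, Function.update_self]
          · rw [Function.update_of_ne (by omega), Function.update_of_ne hxy]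
            exact h1 y (by simp only [MSOE.freeFO]; exact Finset.mem_erase.mpr ⟨hxy, hy⟩)
        · intro Y hY
          exact h2 Y (by simpa only [MSOE.freeSO] using hY)
    · rintro ⟨A, hA⟩
      rw [sat_hand, sing_iff a₀ (x + 1) hε] at hA
      obtain ⟨⟨s, hs⟩, htr⟩ := hA
      rw [Function.update_self] at hs
      subst hs
      refine ⟨s, ?_⟩
      rw [ih (Function.update v1 x s) v2 (Function.update Q (x + 1) {s}) V ε hε ?_ ?_]
      · exact htr
      · intro y hy
        by_cases hxy : y = x
        · subst hxy
          rw [Function.update_self, Function.update_self]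
        · rw [Function.update_of_ne (by omega), Function.update_of_ne hxy]
          exact h1 y (by simp only [MSOE.freeFO]; exact Finset.mem_erase.mpr ⟨hxy, hy⟩)
      · intro Y hY
        exact h2 Y (by simpa only [MSOE.freeSO] using hY)
  | exSO X φ ih =>
    intro v1 v2 Q V ε hε h1 h2
    show (∃ A ∈ T.pathSets, MSOE.sat T T.pathSets v1 (Function.update v2 X A) φ) ↔ _
    rw [tr, sat_ex0 hε]
    constructor
    · rintro ⟨A, hA, hsat⟩
      obtain ⟨p, hp, rfl⟩ := hA
      refine ⟨p, hp, ?_⟩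
      rw [← ih v1 (Function.update v2 X (Set.range p)) Q (Function.update V (X + 2) p) p
        hp.2 ?_ ?_]
      · exact hsat
      · intro y hy
        exact h1 y (by simpa only [MSOE.freeFO] using hy)
      · intro Y hY
        by_cases hXY : Y = X
        · subst hXY
          exact ⟨p, hp, Function.update_self _ _ _, Function.update_self _ _ _⟩
        · rw [Function.update_of_ne (by omega), Function.update_of_ne hXY]
          exact h2 Y (by simp only [MSOE.freeSO]; exact Finset.mem_erase.mpr ⟨hXY, hY⟩)
    · rintro ⟨p, hp, hsat⟩
      refine ⟨Set.range p, ⟨p, hp, rfl⟩, ?_⟩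
      rw [ih v1 (Function.update v2 X (Set.range p)) Q (Function.update V (X + 2) p) p
        hp.2 ?_ ?_]
      · exact hsat
      · intro y hy
        exact h1 y (by simpa only [MSOE.freeFO] using hy)
      · intro Y hY
        by_cases hXY : Y = X
        · subst hXY
          exact ⟨p, hp, Function.update_self _ _ _, Function.update_self _ _ _⟩
        · rw [Function.update_of_ne (by omega), Function.update_of_ne hXY]
          exact h2 Y (by simp only [MSOE.freeSO]; exact Finset.mem_erase.mpr ⟨hXY, hY⟩)

/-- Part 1: every closed MPL[E] sentence has an equivalent HyperQCTL* formula. -/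
theorem mpl_to_hqctl (a₀ : AP) (φ : MSOE AP) (hcl : φ.closed) (T : LTree AP) :
    MSOE.modelsMPL T φ ↔ HQCTL.models T (tr a₀ φ) := by
  obtain ⟨hFO, hSO⟩ := hcl
  constructor
  · intro h p hp
    rw [← tr_correct a₀ T φ (fun _ => T.root) (fun _ => ∅) (fun _ => ∅) (fun _ => p) p hp.2
      (fun x hx => by rw [hFO] at hx; exact absurd hx (Finset.notMem_empty x))
      (fun X hX => by rw [hSO] at hX; exact absurd hX (Finset.notMem_empty X))]
    exact h
  · intro h
    obtain ⟨p, hp⟩ := T.exists_initPath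
    show MSOE.sat T T.pathSets (fun _ => T.root) (fun _ => ∅) φ
    rw [tr_correct a₀ T φ (fun _ => T.root) (fun _ => ∅) (fun _ => ∅) (fun _ => p) p hp.2
      (fun x hx => by rw [hFO] at hx; exact absurd hx (Finset.notMem_empty x))
      (fun X hX => by rw [hSO] at hX; exact absurd hX (Finset.notMem_empty X))]
    exact h p hp

end HQCTL

end Translation
section CombTrees

/-- strict ancestor relation of the comb tree -/
def ltc {I : Type} : Option (I × ℕ) → Option (I × ℕ) → Prop
  | none, some _ => True
  | some (i, n), some (j, m) => i = j ∧ n < m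
  | _, none => False

/-- the comb tree over branch set `I`: a root with one infinite non-branching
path per element of `I`, constantly labeled `∅` -/
def combTree (AP : Type) (I : Type) [Nonempty I] : LTree AP where
  node := Option (I × ℕ)
  lt := ltc
  lt_irrefl := by
    rintro (_ | ⟨i, n⟩) h
    · exact h
    · exact absurd h.2 (lt_irrefl n)
  lt_trans := by
    rintro (_ | ⟨a, n⟩) (_ | ⟨b, m⟩) (_ | ⟨c, k⟩) h1 h2 <;>
      first
        | exact h1.elim
        | exact h2.elim
        | trivial
        | exact ⟨h1.1.trans h2.1, h1.2.trans h2.2⟩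
  root := none
  root_min := by
    rintro (_ | ⟨i, n⟩)
    · exact Or.inl rfl
    · exact Or.inr trivial
  anc_total := by
    rintro (_ | ⟨i, n⟩) (_ | ⟨a, k⟩) (_ | ⟨b, m⟩) h1 h2
    all_goals first
        | exact h1.elim
        | exact h2.elim
        | exact Or.inl rfl
        | exact Or.inr (Or.inl trivial)
        | exact Or.inr (Or.inr trivial)
        | skip
    obtain ⟨rfl, hk⟩ := h1
    obtain ⟨rfl, hm⟩ := h2
    rcases lt_trichotomy k m with h | h | h
    · exact Or.inr (Or.inl ⟨rfl, h⟩)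
    · exact Or.inl (by rw [h])
    · exact Or.inr (Or.inr ⟨rfl, h⟩)
  anc_finite := by
    rintro (_ | ⟨i, n⟩)
    · convert Set.finite_empty
      ext (_ | ⟨a, k⟩) <;> simp [ltc]
    · apply Set.Finite.subset
        (Set.Finite.insert none ((Set.finite_Iio n).image (fun m => some (i, m))))
      rintro (_ | ⟨a, k⟩) h
      · exact Set.mem_insert _ _
      · obtain ⟨rfl, hk⟩ := h
        exact Set.mem_insert_of_mem _ ⟨k, hk, rfl⟩
  succ_exists := by
    rintro (_ | ⟨i, n⟩)
    · refine ⟨some (Classical.arbitrary I, 0), trivial, ?_⟩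
      rintro ⟨(_ | ⟨a, k⟩), h1, h2⟩
      · exact h1
      · have h2' : a = Classical.arbitrary I ∧ k < 0 := h2
        omega
    · refine ⟨some (i, n + 1), ⟨rfl, by omega⟩, ?_⟩
      rintro ⟨(_ | ⟨a, k⟩), h1, h2⟩
      · exact h1
      · have h1' : i = a ∧ n < k := h1
        have h2' : a = i ∧ k < n + 1 := h2
        omega
  label := fun _ => ∅

namespace CombTree

variable {AP : Type} {I : Type} [Nonempty I]

/-- the branch path through branch `i` -/
def bpath (i : I) : ℕ → (combTree AP I).node := fun k =>
  match k with
  | 0 => none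
  | k + 1 => some (i, k)

lemma bpath_initPath (i : I) : (combTree AP I).InitPath (bpath i) := by
  constructor
  · intro k
    match k with
    | 0 =>
      refine ⟨trivial, ?_⟩
      rintro ⟨(_ | ⟨a, m⟩), h1, h2⟩
      · exact h1
      · have h2' : a = i ∧ m < 0 := h2
        omega
    | k + 1 =>
      refine ⟨⟨rfl, by omega⟩, ?_⟩
      rintro ⟨(_ | ⟨a, m⟩), h1, h2⟩
      · exact h1
      · have h1' : i = a ∧ k < m := h1
        have h2' : a = i ∧ m < k + 1 := h2
        omega
  · rfl

lemma initPath_eq_bpath {p : ℕ → (combTree AP I).node} (hp : (combTree AP I).InitPath p) :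
    ∃ i, p = bpath i := by
  have h0 : p 0 = none := hp.2
  -- p 1 = some (i, 0)
  have h1 := hp.1 0
  rw [h0] at h1
  obtain ⟨i, n, hin⟩ : ∃ i n, p 1 = some (i, n) := by
    match h : p 1 with
    | none => rw [h] at h1; exact h1.1.elim
    | some (i, n) => exact ⟨i, n, rfl⟩
  have hn0 : n = 0 := by
    by_contra hne
    rw [hin] at h1
    exact h1.2 ⟨some (i, 0), trivial, rfl, by omega⟩
  subst hn0
  refine ⟨i, funext fun k => ?_⟩
  induction k with
  | zero => exact h0
  | succ k ih =>
    match k, ih with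
    | 0, _ => exact hin
    | k + 1, ih =>
      have hstep := hp.1 (k + 1)
      rw [ih] at hstep
      obtain ⟨j, m, hjm⟩ : ∃ j m, p (k + 2) = some (j, m) := by
        match h : p (k + 2) with
        | none => rw [h] at hstep; exact hstep.1.elim
        | some (j, m) => exact ⟨j, m, rfl⟩
      rw [hjm] at hstep
      obtain ⟨⟨rfl, hlt⟩, hnb⟩ := hstep
      have : m = k + 1 := by
        by_contra hne
        exact hnb ⟨some (i, k + 1), ⟨rfl, by omega⟩, rfl, by omega⟩
      subst this
      exact hjm

lemma level_none : (combTree AP I).level none = 0 := (combTree AP I).level_root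

lemma level_some (i : I) (n : ℕ) : (combTree AP I).level (some (i, n)) = n + 1 :=
  (combTree AP I).level_initPath (bpath_initPath i) (n + 1)

lemma none_mem_range_bpath (i : I) :
    (none : (combTree AP I).node) ∈ Set.range (bpath (AP := AP) i) :=
  ⟨0, rfl⟩

lemma some_mem_range_bpath {i j : I} {n : ℕ} :
    (some (j, n) : (combTree AP I).node) ∈ Set.range (bpath (AP := AP) i) ↔ j = i := by
  constructor
  · rintro ⟨k, hk⟩
    match k, hk with
    | 0, hk => exact absurd (Option.some_ne_none _ (hk : (none : Option (I × ℕ)) = some (j, n)).symm) id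
    | k + 1, hk =>
      have h := Option.some.inj hk
      exact (congrArg Prod.fst h).symm
  · rintro rfl
    exact ⟨n + 1, rfl⟩

lemma pathSets_comb :
    (combTree AP I).pathSets = {A | ∃ i : I, A = Set.range (bpath (AP := AP) i)} := by
  ext A
  constructor
  · rintro ⟨p, hp, rfl⟩
    obtain ⟨i, rfl⟩ := initPath_eq_bpath hp
    exact ⟨i, rfl⟩
  · rintro ⟨i, rfl⟩
    exact ⟨bpath i, bpath_initPath i, rfl⟩

end CombTree

end CombTrees
section Transfer

namespace MSOE

variable {AP : Type} {T : LTree AP} {SO : Set (Set T.node)}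
  {v1 : ℕ → T.node} {v2 : ℕ → Set T.node}

lemma sat_patom {a : AP} {x : ℕ} : sat T SO v1 v2 (.patom a x) ↔ a ∈ T.label (v1 x) := Iff.rfl
lemma sat_lt {x y : ℕ} : sat T SO v1 v2 (.lt x y) ↔ T.lt (v1 x) (v1 y) := Iff.rfl
lemma sat_eq {x y : ℕ} : sat T SO v1 v2 (.eq x y) ↔ v1 x = v1 y := Iff.rfl
lemma sat_el {x y : ℕ} : sat T SO v1 v2 (.el x y) ↔ T.level (v1 x) = T.level (v1 y) := Iff.rfl
lemma sat_mem {x X : ℕ} : sat T SO v1 v2 (.mem x X) ↔ v1 x ∈ v2 X := Iff.rfl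
lemma sat_not {φ : MSOE AP} : sat T SO v1 v2 (.not φ) ↔ ¬ sat T SO v1 v2 φ := Iff.rfl
lemma sat_or {φ ψ : MSOE AP} :
    sat T SO v1 v2 (.or φ ψ) ↔ sat T SO v1 v2 φ ∨ sat T SO v1 v2 ψ := Iff.rfl
lemma sat_exFO {x : ℕ} {φ : MSOE AP} :
    sat T SO v1 v2 (.exFO x φ) ↔ ∃ s, sat T SO (Function.update v1 x s) v2 φ := Iff.rfl
lemma sat_exSO {X : ℕ} {φ : MSOE AP} :
    sat T SO v1 v2 (.exSO X φ) ↔ ∃ A ∈ SO, sat T SO v1 (Function.update v2 X A) φ := Iff.rfl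

end MSOE

namespace CombTree

/-- `R` is a partial function from left to right -/
def Func {I J : Type} (R : Set (I × J)) : Prop :=
  ∀ ⦃i j j'⦄, (i, j) ∈ R → (i, j') ∈ R → j = j'

/-- `R` is injective -/
def Inj {I J : Type} (R : Set (I × J)) : Prop :=
  ∀ ⦃i i' j⦄, (i, j) ∈ R → (i', j) ∈ R → i = i'

lemma extend_right {I J : Type} [Infinite J] {R : Set (I × J)} (hfin : R.Finite)
    (h1 : Func R) (h2 : Inj R) (i : I) :
    ∃ j R', R ⊆ R' ∧ R'.Finite ∧ Func R' ∧ Inj R' ∧ (i, j) ∈ R' := by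
  by_cases hex : ∃ j, (i, j) ∈ R
  · obtain ⟨j, hj⟩ := hex
    exact ⟨j, R, subset_rfl, hfin, h1, h2, hj⟩
  · push_neg at hex
    obtain ⟨j, hj⟩ := (hfin.image Prod.snd).infinite_compl.nonempty
    have hj' : ∀ a, (a, j) ∉ R := fun a ha => hj (Set.mem_image_of_mem Prod.snd ha)
    refine ⟨j, insert (i, j) R, Set.subset_insert _ _, hfin.insert _, ?_, ?_,
      Set.mem_insert _ _⟩
    · rintro a b b' hab hab'
      simp only [Set.mem_insert_iff, Prod.mk.injEq] at hab hab'
      rcases hab with ⟨rfl, rfl⟩ | hab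
      · rcases hab' with ⟨-, rfl⟩ | hab'
        · rfl
        · exact absurd hab' (hex b')
      · rcases hab' with ⟨rfl, rfl⟩ | hab'
        · exact absurd hab (hex b)
        · exact h1 hab hab'
    · rintro a a' b hab hab'
      simp only [Set.mem_insert_iff, Prod.mk.injEq] at hab hab'
      rcases hab with ⟨rfl, rfl⟩ | hab
      · rcases hab' with ⟨rfl, -⟩ | hab'
        · rfl
        · exact absurd hab' (hj' a')
      · rcases hab' with ⟨rfl, rfl⟩ | hab'
        · exact absurd hab (hj' a)
        · exact h2 hab hab'

lemma extend_left {I J : Type} [Infinite I] {R : Set (I × J)} (hfin : R.Finite)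
    (h1 : Func R) (h2 : Inj R) (j : J) :
    ∃ i R', R ⊆ R' ∧ R'.Finite ∧ Func R' ∧ Inj R' ∧ (i, j) ∈ R' := by
  by_cases hex : ∃ i, (i, j) ∈ R
  · obtain ⟨i, hi⟩ := hex
    exact ⟨i, R, subset_rfl, hfin, h1, h2, hi⟩
  · push_neg at hex
    obtain ⟨i, hi⟩ := (hfin.image Prod.fst).infinite_compl.nonempty
    have hi' : ∀ b, (i, b) ∉ R := fun b hb => hi (Set.mem_image_of_mem Prod.fst hb)
    refine ⟨i, insert (i, j) R, Set.subset_insert _ _, hfin.insert _, ?_, ?_,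
      Set.mem_insert _ _⟩
    · rintro a b b' hab hab'
      simp only [Set.mem_insert_iff, Prod.mk.injEq] at hab hab'
      rcases hab with ⟨rfl, rfl⟩ | hab
      · rcases hab' with ⟨-, rfl⟩ | hab'
        · rfl
        · exact absurd hab' (hi' b')
      · rcases hab' with ⟨rfl, rfl⟩ | hab'
        · exact absurd hab (hi' b)
        · exact h1 hab hab'
    · rintro a a' b hab hab'
      simp only [Set.mem_insert_iff, Prod.mk.injEq] at hab hab'
      rcases hab with ⟨rfl, rfl⟩ | hab
      · rcases hab' with ⟨rfl, -⟩ | hab'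
        · rfl
        · exact absurd hab' (hex a')
      · rcases hab' with ⟨rfl, rfl⟩ | hab'
        · exact absurd hab (hex a)
        · exact h2 hab hab'

variable {AP : Type}

/-- matching of nodes along a partial bijection of branches -/
def NMatch {I J : Type} [Nonempty I] [Nonempty J] (R : Set (I × J))
    (a : (combTree AP I).node) (b : (combTree AP J).node) : Prop :=
  (a = none ∧ b = none) ∨ ∃ i j n, (i, j) ∈ R ∧ a = some (i, n) ∧ b = some (j, n)

lemma NMatch_mono {I J : Type} [Nonempty I] [Nonempty J] {R R' : Set (I × J)}
    (h : R ⊆ R') {a : (combTree AP I).node} {b : (combTree AP J).node} :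
    NMatch (AP := AP) R a b → NMatch (AP := AP) R' a b := by
  rintro (⟨rfl, rfl⟩ | ⟨i, j, n, hij, rfl, rfl⟩)
  · exact Or.inl ⟨rfl, rfl⟩
  · exact Or.inr ⟨i, j, n, h hij, rfl, rfl⟩

theorem comb_transfer {I J : Type} [Nonempty I] [Nonempty J] [Infinite I] [Infinite J] :
    ∀ (φ : MSOE AP) (R : Set (I × J)), R.Finite → Func R → Inj R →
      ∀ (v1 : ℕ → (combTree AP I).node) (v2 : ℕ → Set (combTree AP I).node)
        (w1 : ℕ → (combTree AP J).node) (w2 : ℕ → Set (combTree AP J).node),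
      (∀ x ∈ φ.freeFO, NMatch (AP := AP) R (v1 x) (w1 x)) →
      (∀ X ∈ φ.freeSO, ∃ i j, (i, j) ∈ R ∧ v2 X = Set.range (bpath (AP := AP) i) ∧
        w2 X = Set.range (bpath (AP := AP) j)) →
      (MSOE.sat (combTree AP I) (combTree AP I).pathSets v1 v2 φ ↔
        MSOE.sat (combTree AP J) (combTree AP J).pathSets w1 w2 φ) := by
  intro φ
  induction φ with
  | patom a x =>
    intro R hfin h1 h2 v1 v2 w1 w2 hFO hSO
    exact Iff.rfl
  | lt x y =>
    intro R hfin h1 h2 v1 v2 w1 w2 hFO hSO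
    have hmx := hFO x (by simp [MSOE.freeFO])
    have hmy := hFO y (by simp [MSOE.freeFO])
    rw [MSOE.sat_lt, MSOE.sat_lt]
    rcases hmx with ⟨hx1, hx2⟩ | ⟨i, j, n, hij, hx1, hx2⟩ <;>
      rcases hmy with ⟨hy1, hy2⟩ | ⟨i', j', n', hij', hy1, hy2⟩ <;>
      rw [hx1, hx2, hy1, hy2]
    · exact Iff.rfl
    · exact Iff.rfl
    · exact Iff.rfl
    · constructor
      · rintro ⟨rfl, hlt⟩
        exact ⟨h1 hij hij', hlt⟩
      · rintro ⟨rfl, hlt⟩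
        exact ⟨h2 hij hij', hlt⟩
  | eq x y =>
    intro R hfin h1 h2 v1 v2 w1 w2 hFO hSO
    have hmx := hFO x (by simp [MSOE.freeFO])
    have hmy := hFO y (by simp [MSOE.freeFO])
    rw [MSOE.sat_eq, MSOE.sat_eq]
    rcases hmx with ⟨hx1, hx2⟩ | ⟨i, j, n, hij, hx1, hx2⟩ <;>
      rcases hmy with ⟨hy1, hy2⟩ | ⟨i', j', n', hij', hy1, hy2⟩ <;>
      rw [hx1, hx2, hy1, hy2]
    · exact iff_of_true rfl rfl
    · exact iff_of_false (fun h => by cases h) (fun h => by cases h)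
    · exact iff_of_false (fun h => by cases h) (fun h => by cases h)
    · constructor
      · intro h
        have h' := Option.some.inj h
        have e1 : i = i' := congrArg Prod.fst h'
        have e2 : n = n' := congrArg Prod.snd h'
        subst e1; subst e2
        rw [h1 hij hij']
      · intro h
        have h' := Option.some.inj h
        have e1 : j = j' := congrArg Prod.fst h'
        have e2 : n = n' := congrArg Prod.snd h'
        subst e1; subst e2
        rw [h2 hij hij']
  | el x y =>
    intro R hfin h1 h2 v1 v2 w1 w2 hFO hSO
    have hmx := hFO x (by simp [MSOE.freeFO])
    have hmy := hFO y (by simp [MSOE.freeFO])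
    rw [MSOE.sat_el, MSOE.sat_el]
    rcases hmx with ⟨hx1, hx2⟩ | ⟨i, j, n, hij, hx1, hx2⟩ <;>
      rcases hmy with ⟨hy1, hy2⟩ | ⟨i', j', n', hij', hy1, hy2⟩ <;>
      rw [hx1, hx2, hy1, hy2] <;>
      simp only [level_none, level_some]
  | mem x X =>
    intro R hfin h1 h2 v1 v2 w1 w2 hFO hSO
    have hmx := hFO x (by simp [MSOE.freeFO])
    obtain ⟨i0, j0, hij0, hv2, hw2⟩ := hSO X (by simp [MSOE.freeSO])
    rw [MSOE.sat_mem, MSOE.sat_mem, hv2, hw2]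
    rcases hmx with ⟨hx1, hx2⟩ | ⟨i, j, n, hij, hx1, hx2⟩ <;> rw [hx1, hx2]
    · exact iff_of_true (none_mem_range_bpath i0) (none_mem_range_bpath j0)
    · erw [some_mem_range_bpath, some_mem_range_bpath]
      constructor
      · intro h
        subst h
        exact h1 hij hij0
      · intro h
        subst h
        exact h2 hij hij0
  | not φ ih =>
    intro R hfin h1 h2 v1 v2 w1 w2 hFO hSO
    rw [MSOE.sat_not, MSOE.sat_not, ih R hfin h1 h2 v1 v2 w1 w2 hFO hSO]
  | or φ ψ ihφ ihψ =>
    intro R hfin h1 h2 v1 v2 w1 w2 hFO hSO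
    simp only [MSOE.freeFO, MSOE.freeSO, Finset.mem_union] at hFO hSO
    rw [MSOE.sat_or, MSOE.sat_or,
      ihφ R hfin h1 h2 v1 v2 w1 w2 (fun x hx => hFO x (Or.inl hx)) (fun X hX => hSO X (Or.inl hX)),
      ihψ R hfin h1 h2 v1 v2 w1 w2 (fun x hx => hFO x (Or.inr hx)) (fun X hX => hSO X (Or.inr hX))]
  | exFO x φ ih =>
    intro R hfin h1 h2 v1 v2 w1 w2 hFO hSO
    rw [MSOE.sat_exFO, MSOE.sat_exFO]
    constructor
    · rintro ⟨s, hs⟩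
      obtain ⟨t, R', hsub, hfin', h1', h2', hm⟩ :
          ∃ (t : (combTree AP J).node) (R' : Set (I × J)), R ⊆ R' ∧ R'.Finite ∧
            Func R' ∧ Inj R' ∧ NMatch (AP := AP) R' s t := by
        match s with
        | none => exact ⟨none, R, subset_rfl, hfin, h1, h2, Or.inl ⟨rfl, rfl⟩⟩
        | some (i, n) =>
          obtain ⟨j, R', hsub, hfin', h1', h2', hij⟩ := extend_right hfin h1 h2 i
          exact ⟨some (j, n), R', hsub, hfin', h1', h2', Or.inr ⟨i, j, n, hij, rfl, rfl⟩⟩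
      refine ⟨t, ?_⟩
      rw [← ih R' hfin' h1' h2' (Function.update v1 x s) v2 (Function.update w1 x t) w2 ?_ ?_]
      · exact hs
      · intro y hy
        by_cases hxy : y = x
        · subst hxy
          rw [Function.update_self, Function.update_self]
          exact hm
        · rw [Function.update_of_ne hxy, Function.update_of_ne hxy]
          exact NMatch_mono hsub
            (hFO y (by simp only [MSOE.freeFO]; exact Finset.mem_erase.mpr ⟨hxy, hy⟩))
      · intro Y hY
        obtain ⟨i, j, hij, e1, e2⟩ := hSO Y (by simpa only [MSOE.freeSO] using hY)
        exact ⟨i, j, hsub hij, e1, e2⟩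
    · rintro ⟨t, ht⟩
      obtain ⟨s, R', hsub, hfin', h1', h2', hm⟩ :
          ∃ (s : (combTree AP I).node) (R' : Set (I × J)), R ⊆ R' ∧ R'.Finite ∧
            Func R' ∧ Inj R' ∧ NMatch (AP := AP) R' s t := by
        match t with
        | none => exact ⟨none, R, subset_rfl, hfin, h1, h2, Or.inl ⟨rfl, rfl⟩⟩
        | some (j, n) =>
          obtain ⟨i, R', hsub, hfin', h1', h2', hij⟩ := extend_left hfin h1 h2 j
          exact ⟨some (i, n), R', hsub, hfin', h1', h2', Or.inr ⟨i, j, n, hij, rfl, rfl⟩⟩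
      refine ⟨s, ?_⟩
      rw [ih R' hfin' h1' h2' (Function.update v1 x s) v2 (Function.update w1 x t) w2 ?_ ?_]
      · exact ht
      · intro y hy
        by_cases hxy : y = x
        · subst hxy
          rw [Function.update_self, Function.update_self]
          exact hm
        · rw [Function.update_of_ne hxy, Function.update_of_ne hxy]
          exact NMatch_mono hsub
            (hFO y (by simp only [MSOE.freeFO]; exact Finset.mem_erase.mpr ⟨hxy, hy⟩))
      · intro Y hY
        obtain ⟨i, j, hij, e1, e2⟩ := hSO Y (by simpa only [MSOE.freeSO] using hY)
        exact ⟨i, j, hsub hij, e1, e2⟩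
  | exSO X φ ih =>
    intro R hfin h1 h2 v1 v2 w1 w2 hFO hSO
    rw [MSOE.sat_exSO, MSOE.sat_exSO]
    constructor
    · rintro ⟨A, hA, hsat⟩
      obtain ⟨p, hp, rfl⟩ := hA
      obtain ⟨i, rfl⟩ := initPath_eq_bpath hp
      obtain ⟨j, R', hsub, hfin', h1', h2', hij⟩ := extend_right hfin h1 h2 i
      refine ⟨Set.range (bpath (AP := AP) j), ⟨bpath j, bpath_initPath j, rfl⟩, ?_⟩
      rw [← ih R' hfin' h1' h2' v1 (Function.update v2 X (Set.range (bpath (AP := AP) i)))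
        w1 (Function.update w2 X (Set.range (bpath (AP := AP) j))) ?_ ?_]
      · exact hsat
      · intro y hy
        exact NMatch_mono hsub (hFO y (by simpa only [MSOE.freeFO] using hy))
      · intro Y hY
        by_cases hXY : Y = X
        · subst hXY
          rw [Function.update_self, Function.update_self]
          exact ⟨i, j, hij, rfl, rfl⟩
        · rw [Function.update_of_ne hXY, Function.update_of_ne hXY]
          obtain ⟨i', j', hij', e1, e2⟩ := hSO Y
            (by simp only [MSOE.freeSO]; exact Finset.mem_erase.mpr ⟨hXY, hY⟩)
          exact ⟨i', j', hsub hij', e1, e2⟩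
    · rintro ⟨B, hB, hsat⟩
      obtain ⟨q, hq, rfl⟩ := hB
      obtain ⟨j, rfl⟩ := initPath_eq_bpath hq
      obtain ⟨i, R', hsub, hfin', h1', h2', hij⟩ := extend_left hfin h1 h2 j
      refine ⟨Set.range (bpath (AP := AP) i), ⟨bpath i, bpath_initPath i, rfl⟩, ?_⟩
      rw [ih R' hfin' h1' h2' v1 (Function.update v2 X (Set.range (bpath (AP := AP) i)))
        w1 (Function.update w2 X (Set.range (bpath (AP := AP) j))) ?_ ?_]
      · exact hsat
      · intro y hy
        exact NMatch_mono hsub (hFO y (by simpa only [MSOE.freeFO] using hy))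
      · intro Y hY
        by_cases hXY : Y = X
        · subst hXY
          rw [Function.update_self, Function.update_self]
          exact ⟨i, j, hij, rfl, rfl⟩
        · rw [Function.update_of_ne hXY, Function.update_of_ne hXY]
          obtain ⟨i', j', hij', e1, e2⟩ := hSO Y
            (by simp only [MSOE.freeSO]; exact Finset.mem_erase.mpr ⟨hXY, hY⟩)
          exact ⟨i', j', hsub hij', e1, e2⟩

/-- no closed MPL[E] sentence distinguishes comb trees over two infinite branch sets -/
theorem comb_indistinguishable {I J : Type} [Nonempty I] [Nonempty J]
    [Infinite I] [Infinite J] (φ : MSOE AP) (hcl : φ.closed) :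
    MSOE.modelsMPL (combTree AP I) φ ↔ MSOE.modelsMPL (combTree AP J) φ := by
  obtain ⟨hFO, hSO⟩ := hcl
  exact comb_transfer φ ∅ Set.finite_empty (fun i j j' h => h.elim) (fun i i' j h => h.elim)
    _ _ _ _
    (fun x hx => by rw [hFO] at hx; exact absurd hx (Finset.notMem_empty x))
    (fun X hX => by rw [hSO] at hX; exact absurd hX (Finset.notMem_empty X))

end CombTree

end Transfer
section Separation

namespace HQCTL

variable {AP : Type}

/-- every initial path has a strictly future position in `q` -/
def C1 (a₀ : AP) : HQCTL AP := .not (.ex 0 (.not (.next (hF a₀ (.qatom 1 0)))))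

/-- any two `q`-positions at the same level coincide -/
def C2 (a₀ : AP) : HQCTL AP :=
  .not (.ex 0 (.ex 1 (hF a₀ (hand (.qatom 1 0) (hand (.qatom 1 1) (.not (heq 0 1)))))))

/-- the separating HyperQCTL* formula: there is a set of non-root nodes meeting
every initial path, any two of whose elements at the same level coincide — this
spells out countability of the branching and is not MPL[E]-expressible. -/
def psi (a₀ : AP) : HQCTL AP := .exPr 1 (hand (C1 a₀) (C2 a₀))

variable {T : LTree AP} {Q : ℕ → Set T.node} {V : ℕ → ℕ → T.node} {ε : ℕ → T.node}

lemma sat_C1 (a₀ : AP) (hε : ε 0 = T.root) :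
    sat T Q V ε 0 (C1 a₀) ↔ ∀ p, T.InitPath p → ∃ j, 1 ≤ j ∧ p j ∈ Q 1 := by
  simp only [C1]
  rw [sat_not, sat_ex0 hε]
  constructor
  · intro h p hp
    by_contra hc
    apply h
    refine ⟨p, hp, ?_⟩
    rw [sat_not, sat_next, sat_hF]
    rintro ⟨j, hj, hq⟩
    rw [sat_qatom, Function.update_self] at hq
    exact hc ⟨j, hj, hq⟩
  · rintro h ⟨p, hp, hn⟩
    rw [sat_not, sat_next, sat_hF] at hn
    obtain ⟨j, hj, hq⟩ := h p hp
    exact hn ⟨j, hj, by rw [sat_qatom, Function.update_self]; exact hq⟩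

lemma sat_C2 (a₀ : AP) (hε : ε 0 = T.root) :
    sat T Q V ε 0 (C2 a₀) ↔ ∀ p p', T.InitPath p → T.InitPath p' →
      ∀ j, p j ∈ Q 1 → p' j ∈ Q 1 → p j = p' j := by
  simp only [C2]
  rw [sat_not, sat_exex0 hε]
  constructor
  · intro h p p' hp hp' j h1 h2
    by_contra hne
    refine h ⟨p, p', hp, hp', ?_⟩
    rw [sat_hF]
    refine ⟨j, Nat.zero_le j, ?_⟩
    rw [sat_hand, sat_hand, sat_qatom, sat_qatom, sat_not, sat_heq,
      Function.update_of_ne (by omega : (0:ℕ) ≠ 1), Function.update_self,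
      Function.update_self]
    exact ⟨h1, h2, hne⟩
  · rintro h ⟨p, p', hp, hp', hs⟩
    rw [sat_hF] at hs
    obtain ⟨j, -, hs⟩ := hs
    rw [sat_hand, sat_hand, sat_qatom, sat_qatom, sat_not, sat_heq,
      Function.update_of_ne (by omega : (0:ℕ) ≠ 1), Function.update_self,
      Function.update_self] at hs
    exact hs.2.2 (h p p' hp hp' j hs.1 hs.2.1)

end HQCTL

namespace CombTree

variable {AP : Type}

lemma psi_models_combNat (a₀ : AP) : HQCTL.models (combTree AP ℕ) (HQCTL.psi a₀) := by
  intro p hp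
  simp only [HQCTL.psi]
  rw [HQCTL.sat_exPr]
  refine ⟨{s | ∃ n : ℕ, s = some (n, n)}, ?_⟩
  rw [HQCTL.sat_hand, HQCTL.sat_C1 a₀ hp.2, HQCTL.sat_C2 a₀ hp.2, Function.update_self]
  constructor
  · intro q hq
    obtain ⟨i, rfl⟩ := initPath_eq_bpath hq
    exact ⟨i + 1, by omega, ⟨i, rfl⟩⟩
  · intro q q' hq hq' j h1 h2
    obtain ⟨i, rfl⟩ := initPath_eq_bpath hq
    obtain ⟨i', rfl⟩ := initPath_eq_bpath hq'
    match j with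
    | 0 => rfl
    | j + 1 =>
      obtain ⟨n, hn⟩ := h1
      obtain ⟨n', hn'⟩ := h2
      have e1 := Option.some.inj hn
      have e2 := Option.some.inj hn'
      have a1 : i = n := congrArg Prod.fst e1
      have a2 : j = n := congrArg Prod.snd e1
      have a3 : i' = n' := congrArg Prod.fst e2
      have a4 : j = n' := congrArg Prod.snd e2
      rw [show i = i' from by omega]

lemma psi_not_models_combReal (a₀ : AP) :
    ¬ HQCTL.models (combTree AP ℝ) (HQCTL.psi a₀) := by
  intro h
  have hp := bpath_initPath (AP := AP) (I := ℝ) 0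
  have h' := h (bpath 0) hp
  simp only [HQCTL.psi] at h'
  rw [HQCTL.sat_exPr] at h'
  obtain ⟨A, hA⟩ := h'
  rw [HQCTL.sat_hand, HQCTL.sat_C1 a₀ hp.2, HQCTL.sat_C2 a₀ hp.2,
    Function.update_self] at hA
  obtain ⟨h1, h2⟩ := hA
  have hf : ∀ r : ℝ, ∃ j, 1 ≤ j ∧ bpath (AP := AP) r j ∈ A := fun r =>
    h1 (bpath r) (bpath_initPath r)
  choose f hf1 hf2 using hf
  have hinj : Function.Injective f := by
    intro r r' he
    have heq := h2 (bpath r) (bpath r') (bpath_initPath r) (bpath_initPath r') (f r)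
      (hf2 r) (he ▸ hf2 r')
    obtain ⟨k, hk⟩ : ∃ k, f r = k + 1 := ⟨f r - 1, by have := hf1 r; omega⟩
    rw [hk] at heq
    exact congrArg Prod.fst (Option.some.inj heq)
  have hle := Cardinal.mk_le_of_injective hinj
  rw [Cardinal.mk_real, Cardinal.mk_nat] at hle
  exact absurd hle (not_le.mpr Cardinal.aleph0_lt_continuum)

end CombTree

end Separation
/-- HyperQCTL* is strictly more expressive than MPL[E]. -/
theorem hyperQCTLStar_strictly_more_expressive_than_mplE (AP : Type)
    [Fintype AP] [Nonempty AP] :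
    (∀ φ : MSOE AP, φ.closed → ∃ ψ : HQCTL AP,
        ∀ T : LTree AP, MSOE.modelsMPL T φ ↔ HQCTL.models T ψ) ∧
    (∃ ψ : HQCTL AP,
        ¬ ∃ φ : MSOE AP, φ.closed ∧
          ∀ T : LTree AP, MSOE.modelsMPL T φ ↔ HQCTL.models T ψ) := by
  constructor
  · intro φ hcl
    exact ⟨HQCTL.tr (Classical.arbitrary AP) φ,
      HQCTL.mpl_to_hqctl (Classical.arbitrary AP) φ hcl⟩
  · refine ⟨HQCTL.psi (Classical.arbitrary AP), ?_⟩
    rintro ⟨φ, hcl, hequiv⟩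
    have hN : MSOE.modelsMPL (combTree AP ℕ) φ :=
      (hequiv _).mpr (CombTree.psi_models_combNat _)
    have hR : ¬ MSOE.modelsMPL (combTree AP ℝ) φ := fun h =>
      CombTree.psi_not_models_combReal _ ((hequiv _).mp h)
    exact hR ((CombTree.comb_indistinguishable φ hcl).mp hN)
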